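/- Two nonlinear contravariant connections written locally as D^{dx^i} = π^{is} ∂/∂x^s − A^i_s ∂/∂ξ_s and †D^{dx^i} = π^{is} ∂/∂x^s − K^i_s ∂/∂ξ_s are associated (satisfy [†D^α, #β^] − [D^β, #α^] − (#[α,β])^ = 0 for all 1-forms α, β) if and only if π^{is} A^j_s = π^{js} K^i_s. -/

import Mathlib

/-- Partial derivative in the base (`x`) direction, `p = (x, ξ)`. -/
noncomputable def pdx {n : ℕ} (k : Fin n)
    (f : (Fin n → ℝ) × (Fin n → ℝ) → ℝ) (p : (Fin n → ℝ) × (Fin n → ℝ)) : ℝ :=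
  fderiv ℝ f p (Pi.single k 1, 0)

/-- Partial derivative in the fibre (`ξ`) direction. -/
noncomputable def pdxi {n : ℕ} (k : Fin n)
    (f : (Fin n → ℝ) × (Fin n → ℝ) → ℝ) (p : (Fin n → ℝ) × (Fin n → ℝ)) : ℝ :=
  fderiv ℝ f p (0, Pi.single k 1)

/-- Partial derivative of a function of `x` only. -/
noncomputable def pd {n : ℕ} (k : Fin n) (f : (Fin n → ℝ) → ℝ) (x : Fin n → ℝ) : ℝ :=
  fderiv ℝ f x (Pi.single k 1)

/-- The nonlinear contravariant connection `π^{is} ∂/∂x^s − A^i_s ∂/∂ξ_s`. -/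
noncomputable def Dop {n : ℕ} (π : Fin n → Fin n → (Fin n → ℝ) → ℝ)
    (A : Fin n → Fin n → (Fin n → ℝ) × (Fin n → ℝ) → ℝ) (m : Fin n)
    (F : (Fin n → ℝ) × (Fin n → ℝ) → ℝ) (p : (Fin n → ℝ) × (Fin n → ℝ)) : ℝ :=
  ∑ s, π m s p.1 * pdx s F p - ∑ s, A m s p * pdxi s F p

/-- The fibrewise linear function `(#dx^i)^ = π^{is} ξ_s`. -/
noncomputable def Ph {n : ℕ} (π : Fin n → Fin n → (Fin n → ℝ) → ℝ) (i : Fin n)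
    (p : (Fin n → ℝ) × (Fin n → ℝ)) : ℝ :=
  ∑ s, π i s p.1 * p.2 s

/-- The fibrewise linear function `(#[dx^i,dx^j])^ = (∂π^{ij}/∂x^s) π^{sk} ξ_k`. -/
noncomputable def PhBr {n : ℕ} (π : Fin n → Fin n → (Fin n → ℝ) → ℝ) (i j : Fin n)
    (p : (Fin n → ℝ) × (Fin n → ℝ)) : ℝ :=
  ∑ s, ∑ k, pd s (π i j) p.1 * π s k p.1 * p.2 k

section Aux
variable {n : ℕ}

lemma fderiv_term (f : (Fin n → ℝ) → ℝ) (hf : ContDiff ℝ (⊤ : ℕ∞) f) (k : Fin n)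
    (p : (Fin n → ℝ) × (Fin n → ℝ)) (v : (Fin n → ℝ) × (Fin n → ℝ)) :
    fderiv ℝ (fun q : (Fin n → ℝ) × (Fin n → ℝ) => f q.1 * q.2 k) p v
      = fderiv ℝ f p.1 v.1 * p.2 k + f p.1 * v.2 k := by
  have h1 : HasFDerivAt (fun q : (Fin n → ℝ) × (Fin n → ℝ) => f q.1)
      ((fderiv ℝ f p.1).comp (ContinuousLinearMap.fst ℝ (Fin n → ℝ) (Fin n → ℝ))) p :=
    ((hf.differentiable (by simp) p.1).hasFDerivAt).comp p hasFDerivAt_fst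
  have h2 : HasFDerivAt (fun q : (Fin n → ℝ) × (Fin n → ℝ) => q.2 k)
      ((ContinuousLinearMap.proj k).comp (ContinuousLinearMap.snd ℝ (Fin n → ℝ) (Fin n → ℝ))) p :=
    (((ContinuousLinearMap.proj k).comp (ContinuousLinearMap.snd ℝ (Fin n → ℝ) (Fin n → ℝ))).hasFDerivAt)
  have := (h1.mul h2).fderiv
  rw [show (fun q : (Fin n → ℝ) × (Fin n → ℝ) => f q.1 * q.2 k) = (fun q => f q.1) * (fun q => q.2 k) from rfl, this]
  simp [ContinuousLinearMap.comp_apply]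
  ring

lemma term_diffAt (f : (Fin n → ℝ) → ℝ) (hf : ContDiff ℝ (⊤ : ℕ∞) f) (k : Fin n)
    (p : (Fin n → ℝ) × (Fin n → ℝ)) :
    DifferentiableAt ℝ (fun q : (Fin n → ℝ) × (Fin n → ℝ) => f q.1 * q.2 k) p :=
  ((hf.differentiable (by simp) p.1).comp p differentiableAt_fst).mul
    (((ContinuousLinearMap.proj k).comp (ContinuousLinearMap.snd ℝ (Fin n → ℝ) (Fin n → ℝ))).differentiableAt)

lemma Ph_diffAt (π : Fin n → Fin n → (Fin n → ℝ) → ℝ) (hπ : ∀ i j, ContDiff ℝ (⊤ : ℕ∞) (π i j))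
    (j : Fin n) (p : (Fin n → ℝ) × (Fin n → ℝ)) : DifferentiableAt ℝ (Ph π j) p := by
  unfold Ph
  exact DifferentiableAt.fun_sum fun k _ => term_diffAt (π j k) (hπ j k) k p

lemma pdx_Ph (π : Fin n → Fin n → (Fin n → ℝ) → ℝ) (hπ : ∀ i j, ContDiff ℝ (⊤ : ℕ∞) (π i j))
    (j s : Fin n) (p : (Fin n → ℝ) × (Fin n → ℝ)) :
    pdx s (Ph π j) p = ∑ k, pd s (π j k) p.1 * p.2 k := by
  unfold pdx Ph pd
  rw [fderiv_fun_sum (fun k _ => term_diffAt (π j k) (hπ j k) k p), ContinuousLinearMap.sum_apply]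
  refine Finset.sum_congr rfl fun k _ => ?_
  rw [fderiv_term (π j k) (hπ j k) k p]
  simp

lemma pdxi_Ph (π : Fin n → Fin n → (Fin n → ℝ) → ℝ) (hπ : ∀ i j, ContDiff ℝ (⊤ : ℕ∞) (π i j))
    (j s : Fin n) (p : (Fin n → ℝ) × (Fin n → ℝ)) :
    pdxi s (Ph π j) p = π j s p.1 := by
  unfold pdxi Ph
  rw [fderiv_fun_sum (fun k _ => term_diffAt (π j k) (hπ j k) k p), ContinuousLinearMap.sum_apply]
  have : ∀ k : Fin n, (fderiv ℝ (fun q : (Fin n → ℝ) × (Fin n → ℝ) => π j k q.1 * q.2 k) p)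
      ((0 : Fin n → ℝ), Pi.single s 1) = π j k p.1 * (Pi.single s 1 : Fin n → ℝ) k := by
    intro k
    rw [fderiv_term (π j k) (hπ j k) k p]
    simp
  simp only [this]
  simp [Pi.single_apply, mul_ite, Finset.sum_ite_eq']

end Aux

section Aux2
variable {n : ℕ}

lemma pdx_mul (G F : (Fin n → ℝ) × (Fin n → ℝ) → ℝ) (k : Fin n)
    (p : (Fin n → ℝ) × (Fin n → ℝ))
    (hG : DifferentiableAt ℝ G p) (hF : DifferentiableAt ℝ F p) :
    pdx k (fun q => G q * F q) p = pdx k G p * F p + G p * pdx k F p := by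
  unfold pdx; rw [fderiv_fun_mul hG hF]; simp; ring

lemma pdxi_mul (G F : (Fin n → ℝ) × (Fin n → ℝ) → ℝ) (k : Fin n)
    (p : (Fin n → ℝ) × (Fin n → ℝ))
    (hG : DifferentiableAt ℝ G p) (hF : DifferentiableAt ℝ F p) :
    pdxi k (fun q => G q * F q) p = pdxi k G p * F p + G p * pdxi k F p := by
  unfold pdxi; rw [fderiv_fun_mul hG hF]; simp; ring

lemma Dop_mul (π : Fin n → Fin n → (Fin n → ℝ) → ℝ)
    (K : Fin n → Fin n → (Fin n → ℝ) × (Fin n → ℝ) → ℝ) (i : Fin n)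
    (G F : (Fin n → ℝ) × (Fin n → ℝ) → ℝ) (p : (Fin n → ℝ) × (Fin n → ℝ))
    (hG : DifferentiableAt ℝ G p) (hF : DifferentiableAt ℝ F p) :
    Dop π K i (fun q => G q * F q) p = Dop π K i G p * F p + G p * Dop π K i F p := by
  unfold Dop
  simp only [pdx_mul G F _ p hG hF, pdxi_mul G F _ p hG hF]
  have l1 : ∑ s, π i s p.1 * (pdx s G p * F p + G p * pdx s F p)
      = (∑ s, π i s p.1 * pdx s G p) * F p + G p * ∑ s, π i s p.1 * pdx s F p := by
    rw [Finset.sum_mul, Finset.mul_sum, ← Finset.sum_add_distrib]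
    exact Finset.sum_congr rfl fun s _ => by ring
  have l2 : ∑ s, K i s p * (pdxi s G p * F p + G p * pdxi s F p)
      = (∑ s, K i s p * pdxi s G p) * F p + G p * ∑ s, K i s p * pdxi s F p := by
    rw [Finset.sum_mul, Finset.mul_sum, ← Finset.sum_add_distrib]
    exact Finset.sum_congr rfl fun s _ => by ring
  linear_combination l1 - l2

lemma pd_anti (π : Fin n → Fin n → (Fin n → ℝ) → ℝ)
    (hanti : ∀ i j (x : Fin n → ℝ), π i j x = -π j i x) (a b s : Fin n) (x : Fin n → ℝ) :
    pd s (π a b) x = -pd s (π b a) x := by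
  have h : π a b = fun y => -π b a y := funext fun y => hanti a b y
  rw [h]; unfold pd; rw [fderiv_fun_neg]; simp

lemma key_eq (π : Fin n → Fin n → (Fin n → ℝ) → ℝ)
    (A K : Fin n → Fin n → (Fin n → ℝ) × (Fin n → ℝ) → ℝ)
    (hπ : ∀ i j, ContDiff ℝ (⊤ : ℕ∞) (π i j))
    (hanti : ∀ i j (x : Fin n → ℝ), π i j x = -π j i x)
    (hJac : ∀ i j l (x : Fin n → ℝ),
      ∑ s, (π i s x * pd s (π j l) x + π j s x * pd s (π l i) x
            + π l s x * pd s (π i j) x) = 0)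
    (i j : Fin n) (p : (Fin n → ℝ) × (Fin n → ℝ)) :
    Dop π K i (Ph π j) p - Dop π A j (Ph π i) p - PhBr π i j p
      = ∑ s, π i s p.1 * A j s p - ∑ s, π j s p.1 * K i s p := by
  unfold Dop PhBr
  simp only [pdx_Ph π hπ, pdxi_Ph π hπ]
  have e1 : ∀ k : Fin n, ∑ s, (π i s p.1 * pd s (π j k) p.1 - π j s p.1 * pd s (π i k) p.1
      - pd s (π i j) p.1 * π s k p.1) = 0 := by
    intro k
    have hj := hJac i j k p.1
    rw [← hj]
    refine Finset.sum_congr rfl fun s _ => ?_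
    rw [pd_anti π hanti k i s p.1, hanti s k p.1]
    ring
  have hzero : ∑ s, π i s p.1 * (∑ k, pd s (π j k) p.1 * p.2 k)
      - ∑ s, π j s p.1 * (∑ k, pd s (π i k) p.1 * p.2 k)
      - ∑ s, ∑ k, pd s (π i j) p.1 * π s k p.1 * p.2 k = 0 := by
    have h1 : ∑ s, π i s p.1 * (∑ k, pd s (π j k) p.1 * p.2 k)
        = ∑ k, (∑ s, π i s p.1 * pd s (π j k) p.1) * p.2 k := by
      simp only [Finset.mul_sum, ← mul_assoc]
      rw [Finset.sum_comm]
      simp only [Finset.sum_mul]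
    have h2 : ∑ s, π j s p.1 * (∑ k, pd s (π i k) p.1 * p.2 k)
        = ∑ k, (∑ s, π j s p.1 * pd s (π i k) p.1) * p.2 k := by
      simp only [Finset.mul_sum, ← mul_assoc]
      rw [Finset.sum_comm]
      simp only [Finset.sum_mul]
    have h3 : ∑ s, ∑ k, pd s (π i j) p.1 * π s k p.1 * p.2 k
        = ∑ k, (∑ s, pd s (π i j) p.1 * π s k p.1) * p.2 k := by
      rw [Finset.sum_comm]
      simp only [Finset.sum_mul]
    rw [h1, h2, h3, ← Finset.sum_sub_distrib, ← Finset.sum_sub_distrib]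
    refine Finset.sum_eq_zero fun k _ => ?_
    have h := e1 k
    rw [Finset.sum_sub_distrib, Finset.sum_sub_distrib] at h
    linear_combination p.2 k * h
  have hk : ∑ s, K i s p * π j s p.1 = ∑ s, π j s p.1 * K i s p :=
    Finset.sum_congr rfl fun s _ => mul_comm _ _
  have ha : ∑ s, A j s p * π i s p.1 = ∑ s, π i s p.1 * A j s p :=
    Finset.sum_congr rfl fun s _ => mul_comm _ _
  rw [hk, ha]
  linarith [hzero]

end Aux2


/-- Nonlinear contravariant connections `D` (with matrix `A`) and `†D` (with matrix `K`)
are associated, i.e. `[†D^{dx^i}, (#dx^j)^] − [D^{dx^j}, (#dx^i)^] − (#[dx^i,dx^j])^ = 0`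
as operators on smooth functions, iff `π^{is} A^j_s = π^{js} K^i_s`. -/
theorem nonlinear_connections_associated_iff
    (n : ℕ) (π : Fin n → Fin n → (Fin n → ℝ) → ℝ)
    (A K : Fin n → Fin n → (Fin n → ℝ) × (Fin n → ℝ) → ℝ)
    (hπ : ∀ i j, ContDiff ℝ (⊤ : ℕ∞) (π i j))
    (hanti : ∀ i j (x : Fin n → ℝ), π i j x = -π j i x)
    (hJac : ∀ i j l (x : Fin n → ℝ),
      ∑ s, (π i s x * pd s (π j l) x + π j s x * pd s (π l i) x
            + π l s x * pd s (π i j) x) = 0)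
    (hA : ∀ i s, ContDiff ℝ (⊤ : ℕ∞) (A i s))
    (hK : ∀ i s, ContDiff ℝ (⊤ : ℕ∞) (K i s)) :
    (∀ i j (F : (Fin n → ℝ) × (Fin n → ℝ) → ℝ), ContDiff ℝ (⊤ : ℕ∞) F →
      ∀ p : (Fin n → ℝ) × (Fin n → ℝ),
        (Dop π K i (fun q => Ph π j q * F q) p - Ph π j p * Dop π K i F p)
          - (Dop π A j (fun q => Ph π i q * F q) p - Ph π i p * Dop π A j F p)
          - PhBr π i j p * F p = 0)
    ↔ (∀ i j (p : (Fin n → ℝ) × (Fin n → ℝ)),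
        ∑ s, π i s p.1 * A j s p = ∑ s, π j s p.1 * K i s p) := by
  constructor
  · intro h i j p
    have h1 := h i j (fun _ => 1) contDiff_const p
    have ec : ∀ (m : Fin n) (W : Fin n → Fin n → (Fin n → ℝ) × (Fin n → ℝ) → ℝ),
        Dop π W m (fun _ => (1:ℝ)) p = 0 := by
      intro m W
      unfold Dop pdx pdxi
      simp
    simp only [mul_one, ec] at h1
    have hk := key_eq π A K hπ hanti hJac i j p
    linarith [h1, hk]
  · intro h i j F hF p
    have hFd : DifferentiableAt ℝ F p := (hF.differentiable (by simp)) p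
    rw [Dop_mul π K i (Ph π j) F p (Ph_diffAt π hπ j p) hFd,
        Dop_mul π A j (Ph π i) F p (Ph_diffAt π hπ i p) hFd]
    have hk := key_eq π A K hπ hanti hJac i j p
    have h0 := h i j p
    linear_combination F p * hk + F p * h0
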